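/- Let A be an additive category, let C = (X_•, d_•) and C′ be complexes in A, and let f : C → C′ be a morphism of complexes. If C is minimal and f becomes a split monomorphism in the homotopy category K(A), then f is a split monomorphism already in the category of complexes over A (i.e., there is a morphism of complexes g : C′ → C with g ∘ f = id_C on the nose). -/

import Mathlib

open CategoryTheory CategoryTheory.Limits

universe w v u

/-- A morphism `f : X ⟶ Y` in a preadditive category lies in the *radical* if for every
object `Z` and all morphisms `a : Z ⟶ X`, `b : Y ⟶ Z`, the composite `a ≫ f ≫ b` lies in the
Jacobson radical of the endomorphism ring `End Z`. -/
def CategoryTheory.InRadical {A : Type u} [Category.{v} A] [Preadditive A]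
    {X Y : A} (f : X ⟶ Y) : Prop :=
  ∀ (Z : A) (a : Z ⟶ X) (b : Y ⟶ Z), (a ≫ f ≫ b : End Z) ∈ (⊥ : Ideal (End Z)).jacobson

/-- A cochain complex is *minimal* if all its differentials lie in the radical. -/
def CochainComplex.IsMinimal {A : Type u} [Category.{v} A] [Preadditive A]
    (K : CochainComplex A ℤ) : Prop :=
  ∀ i : ℤ, CategoryTheory.InRadical (K.d i (i + 1))


/-- In any (not necessarily commutative) ring, `x + 1` is a unit when `x` lies in the
Jacobson radical of the zero ideal. -/
lemma isUnit_add_one_of_mem_jacobson_bot {R : Type w} [Ring R] {x : R}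
    (hx : x ∈ (⊥ : Ideal R).jacobson) : IsUnit (x + 1) := by
  have left : ∀ y ∈ (⊥ : Ideal R).jacobson, ∃ z, z * (y + 1) = 1 := by
    intro y hy
    obtain ⟨z, hz⟩ := Ideal.mem_jacobson_iff.1 hy 1
    rw [Ideal.mem_bot, mul_one, sub_eq_zero] at hz
    exact ⟨z, by rw [mul_add, mul_one, hz]⟩
  obtain ⟨z, hz⟩ := left x hx
  have hz1 : z * x + z = 1 := by rw [← hz, mul_add, mul_one]
  have hmem : -(z * x) ∈ (⊥ : Ideal R).jacobson :=
    neg_mem (Ideal.mul_mem_left _ z hx)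
  obtain ⟨w, hw⟩ := left _ hmem
  have hzz : -(z * x) + 1 = z := by rw [← hz1]; abel
  rw [hzz] at hw
  have hxw : x + 1 = w := by
    calc x + 1 = (w * z) * (x + 1) := by rw [hw, one_mul]
    _ = w * (z * (x + 1)) := by rw [mul_assoc]
    _ = w := by rw [hz, mul_one]
  exact ⟨⟨x + 1, z, by rw [hxw, hw], hz⟩, rfl⟩

set_option maxHeartbeats 800000 in
/-- If `C` is a minimal complex and `f : C ⟶ C'` becomes a split monomorphism in the homotopy
category `K(A)`, then `f` is a split monomorphism already in the category of complexes. -/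
theorem minimal_splitMono_of_homotopy_splitMono
    {A : Type u} [Category.{v} A] [Preadditive A]
    {C C' : CochainComplex A ℤ} (f : C ⟶ C') (hC : C.IsMinimal)
    (hsplit : IsSplitMono ((HomotopyCategory.quotient A (ComplexShape.up ℤ)).map f)) :
    ∃ g : C' ⟶ C, f ≫ g = 𝟙 C := by
  obtain ⟨r⟩ := hsplit.exists_splitMono
  obtain ⟨g', hg'⟩ :=
    (HomotopyCategory.quotient A (ComplexShape.up ℤ)).map_surjective r.retraction
  have hhom : Homotopy (f ≫ g') (𝟙 C) :=
    HomotopyCategory.homotopyOfEq _ _ (by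
      rw [Functor.map_comp, hg', r.id, CategoryTheory.Functor.map_id])
  have key : ∀ i, IsIso ((f ≫ g').f i) := by
    intro i
    obtain ⟨j, rfl⟩ : ∃ j, i = j + 1 := ⟨i - 1, by ring⟩
    rw [← isUnit_iff_isIso]
    have hc := hhom.comm (j + 1)
    have h1 : dNext (j + 1) hhom.hom = C.d (j + 1) (j + 1 + 1) ≫ hhom.hom (j + 1 + 1) (j + 1) :=
      dNext_eq _ (by simp)
    have h2 : prevD (j + 1) hhom.hom = hhom.hom (j + 1) j ≫ C.d j (j + 1) :=
      prevD_eq _ (by simp)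
    have m1 := hC (j + 1) (C.X (j + 1)) (𝟙 _) (hhom.hom (j + 1 + 1) (j + 1))
    have m2 := hC j (C.X (j + 1)) (hhom.hom (j + 1) j) (𝟙 _)
    have hadd := Ideal.add_mem (α := End (C.X (j + 1))) ((⊥ : Ideal (End (C.X (j + 1)))).jacobson) m1 m2
    have hu := isUnit_add_one_of_mem_jacobson_bot (R := End (C.X (j + 1))) hadd
    convert hu using 1
    · rfl
    rw [hc, h1, h2]
    show _ + 𝟙 (C.X (j + 1)) = _ + 𝟙 (C.X (j + 1))
    rw [Category.id_comp, Category.comp_id]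
  haveI := key
  haveI : IsIso (f ≫ g') := HomologicalComplex.Hom.isIso_of_components _
  refine ⟨g' ≫ inv (f ≫ g'), ?_⟩
  rw [← Category.assoc, IsIso.hom_inv_id]
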